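/- arXiv:2006.14434 — 2 statements merged into one kernel-verified Lean document; each statement's English description precedes it below -/
import Mathlib

section
/- Let k be a field, n ≤ m, and R = k[x_{ij} : 1 ≤ i ≤ n, 1 ≤ j ≤ m]. For an increasing sequence a = (a_1 < ... < a_n) in [m], let LT[a] = x_{1 a_1} x_{2 a_2} ··· x_{n a_n} be the leading (diagonal) term of the maximal minor on columns a. Suppose a = {f_1,...,f̂_i,...,f_{n+1}} and b = {f_1,...,f_i,f̂_{i+1},...,f_{n+1}} are the two subsets of a set f = {f_1 < ... < f_{n+1}} obtained by deleting f_i and f_{i+1} respectively. Then lcm(LT[a], LT[b]) = x_{1 f_1} ··· x_{i-1 f_{i-1}} · x_{i f_i} · x_{i f_{i+1}} · x_{i+1 f_{i+2}} ··· x_{n f_{n+1}}, and the only increasing n-sequences c in [m] with LT[c] dividing this lcm are c = a and c = b. -/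
/-- The exponent vector of the diagonal leading term
`LT[c] = x_{1 c_1} x_{2 c_2} ⋯ x_{n c_n}` of the maximal minor on columns
`c = (c_1 < ⋯ < c_n)` (1-indexed): the exponent of the variable `x_p`. -/
def LTexp (n : ℕ) (c : ℕ → ℕ) : ℕ × ℕ → ℕ :=
  fun p => ((Finset.Icc 1 n).filter (fun i => p = (i, c i))).card

/-- Let `f = (f_1 < ⋯ < f_{n+1})` in `[m]`, and let `a`, `b` be obtained from
`f` by deleting `f_i`, `f_{i+1}` respectively.  Then (divisibility and lcm of
monomials being read off exponent vectors)
`lcm(LT[a], LT[b]) = x_{1 f_1} ⋯ x_{i-1 f_{i-1}} x_{i f_i} x_{i f_{i+1}} x_{i+1 f_{i+2}} ⋯ x_{n f_{n+1}}`,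
and the only increasing `n`-sequences `c` in `[m]` with `LT[c]` dividing this
lcm are `c = a` and `c = b`. -/
theorem lcm_of_consecutive_deletions (n m : ℕ) (hn : 1 ≤ n) (hnm : n ≤ m)
    (f : ℕ → ℕ)
    (hf : ∀ j k : ℕ, 1 ≤ j → j < k → k ≤ n + 1 → f j < f k)
    (hfr : ∀ k : ℕ, 1 ≤ k → k ≤ n + 1 → f k ∈ Finset.Icc 1 m)
    (i : ℕ) (hi1 : 1 ≤ i) (hi2 : i ≤ n)
    (a b : ℕ → ℕ)
    (ha : ∀ k, a k = if k < i then f k else f (k + 1))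
    (hb : ∀ k, b k = if k ≤ i then f k else f (k + 1)) :
    (∀ p : ℕ × ℕ, max (LTexp n a p) (LTexp n b p) =
      ((Finset.Icc 1 (n + 1)).filter
        (fun k => p = ((if k ≤ i then k else k - 1), f k))).card) ∧
    (∀ c : ℕ → ℕ,
      (∀ j k : ℕ, 1 ≤ j → j < k → k ≤ n → c j < c k) →
      (∀ k : ℕ, 1 ≤ k → k ≤ n → c k ∈ Finset.Icc 1 m) →
      (∀ p : ℕ × ℕ, LTexp n c p ≤ max (LTexp n a p) (LTexp n b p)) →
      (∀ k : ℕ, 1 ≤ k → k ≤ n → c k = a k) ∨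
        (∀ k : ℕ, 1 ≤ k → k ≤ n → c k = b k)) := by

  classical
  have hLT1 : ∀ (g : ℕ → ℕ) (p : ℕ × ℕ), LTexp n g p ≤ 1 := by
    intro g p
    unfold LTexp
    apply Finset.card_le_one.mpr
    intro x hx y hy
    simp only [Finset.mem_filter] at hx hy
    have h1 : p.1 = x := by rw [hx.2]
    have h2 : p.1 = y := by rw [hy.2]
    omega
  have hS1 : ∀ p : ℕ × ℕ, ((Finset.Icc 1 (n + 1)).filter
      (fun k => p = ((if k ≤ i then k else k - 1), f k))).card ≤ 1 := by
    intro p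
    apply Finset.card_le_one.mpr
    intro x hx y hy
    simp only [Finset.mem_filter, Finset.mem_Icc] at hx hy
    have h1 : p.2 = f x := by rw [hx.2]
    have h2 : p.2 = f y := by rw [hy.2]
    by_contra hne
    rcases Nat.lt_or_ge x y with h | h
    · have := hf x y hx.1.1 h hy.1.2; omega
    · have hxy : y < x := by omega
      have := hf y x hy.1.1 hxy hx.1.2; omega
  have key : ∀ p : ℕ × ℕ, max (LTexp n a p) (LTexp n b p) =
      ((Finset.Icc 1 (n + 1)).filter
        (fun k => p = ((if k ≤ i then k else k - 1), f k))).card := by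
    intro p
    have hA := hLT1 a p
    have hB := hLT1 b p
    have hS := hS1 p
    have hfwd : (0 < LTexp n a p ∨ 0 < LTexp n b p) →
        0 < ((Finset.Icc 1 (n + 1)).filter
          (fun k => p = ((if k ≤ i then k else k - 1), f k))).card := by
      rintro (h | h)
      · rw [Finset.card_pos]
        unfold LTexp at h
        obtain ⟨j, hj⟩ := Finset.card_pos.mp h
        simp only [Finset.mem_filter, Finset.mem_Icc] at hj
        have haj := ha j
        by_cases hji : j < i
        · refine ⟨j, ?_⟩
          simp only [Finset.mem_filter, Finset.mem_Icc]
          have : j ≤ i := by omega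
          rw [if_pos this]
          rw [if_pos hji] at haj
          exact ⟨⟨hj.1.1, by omega⟩, by rw [hj.2, haj]⟩
        · refine ⟨j + 1, ?_⟩
          simp only [Finset.mem_filter, Finset.mem_Icc]
          have h1 : ¬ (j + 1 ≤ i) := by omega
          rw [if_neg h1]
          rw [if_neg hji] at haj
          refine ⟨⟨by omega, by omega⟩, ?_⟩
          rw [hj.2, haj]
          simp
      · rw [Finset.card_pos]
        unfold LTexp at h
        obtain ⟨j, hj⟩ := Finset.card_pos.mp h
        simp only [Finset.mem_filter, Finset.mem_Icc] at hj
        have hbj := hb j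
        by_cases hji : j ≤ i
        · refine ⟨j, ?_⟩
          simp only [Finset.mem_filter, Finset.mem_Icc]
          rw [if_pos hji]
          rw [if_pos hji] at hbj
          exact ⟨⟨hj.1.1, by omega⟩, by rw [hj.2, hbj]⟩
        · refine ⟨j + 1, ?_⟩
          simp only [Finset.mem_filter, Finset.mem_Icc]
          have h1 : ¬ (j + 1 ≤ i) := by omega
          rw [if_neg h1]
          rw [if_neg hji] at hbj
          refine ⟨⟨by omega, by omega⟩, ?_⟩
          rw [hj.2, hbj]
          simp
    have hbwd : 0 < ((Finset.Icc 1 (n + 1)).filter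
          (fun k => p = ((if k ≤ i then k else k - 1), f k))).card →
        (0 < LTexp n a p ∨ 0 < LTexp n b p) := by
      intro h
      obtain ⟨k, hk⟩ := Finset.card_pos.mp h
      simp only [Finset.mem_filter, Finset.mem_Icc] at hk
      by_cases hki : k ≤ i
      · right
        unfold LTexp
        rw [Finset.card_pos]
        refine ⟨k, ?_⟩
        simp only [Finset.mem_filter, Finset.mem_Icc]
        rw [if_pos hki] at hk
        refine ⟨⟨hk.1.1, by omega⟩, ?_⟩
        rw [hk.2, hb k, if_pos hki]
      · left
        unfold LTexp
        rw [Finset.card_pos]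
        refine ⟨k - 1, ?_⟩
        simp only [Finset.mem_filter, Finset.mem_Icc]
        rw [if_neg hki] at hk
        refine ⟨⟨by omega, by omega⟩, ?_⟩
        have hk1 : ¬ (k - 1 < i) := by omega
        rw [hk.2, ha (k - 1), if_neg hk1]
        have : k - 1 + 1 = k := by omega
        rw [this]
    omega
  refine ⟨key, ?_⟩
  intro c hc hcr hdiv
  have hck : ∀ k, 1 ≤ k → k ≤ n → ∃ k', 1 ≤ k' ∧ k' ≤ n + 1 ∧
      k = (if k' ≤ i then k' else k' - 1) ∧ c k = f k' := by
    intro k h1 h2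
    have h3 : 0 < LTexp n c (k, c k) := by
      unfold LTexp
      rw [Finset.card_pos]
      exact ⟨k, by simp only [Finset.mem_filter, Finset.mem_Icc]; exact ⟨⟨h1, h2⟩, trivial⟩⟩
    have h4 := hdiv (k, c k)
    rw [key (k, c k)] at h4
    have h5 : 0 < ((Finset.Icc 1 (n + 1)).filter
        (fun k' => (k, c k) = ((if k' ≤ i then k' else k' - 1), f k'))).card := by omega
    obtain ⟨k', hk'⟩ := Finset.card_pos.mp h5
    simp only [Finset.mem_filter, Finset.mem_Icc, Prod.mk.injEq] at hk'
    exact ⟨k', hk'.1.1, hk'.1.2, hk'.2.1, hk'.2.2⟩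
  have hlt : ∀ k, 1 ≤ k → k < i → c k = f k := by
    intro k h1 h2
    obtain ⟨k', hk1, hk2, hk3, hk4⟩ := hck k h1 (by omega)
    have : k' = k := by split_ifs at hk3 <;> omega
    rw [hk4, this]
  have hgt : ∀ k, i < k → k ≤ n → c k = f (k + 1) := by
    intro k h1 h2
    obtain ⟨k', hk1, hk2, hk3, hk4⟩ := hck k (by omega) h2
    have : k' = k + 1 := by split_ifs at hk3 <;> omega
    rw [hk4, this]
  have hii : c i = f i ∨ c i = f (i + 1) := by
    obtain ⟨k', hk1, hk2, hk3, hk4⟩ := hck i hi1 hi2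
    by_cases h : k' ≤ i
    · left
      rw [if_pos h] at hk3
      rw [hk4, ← hk3]
    · right
      rw [if_neg h] at hk3
      have : k' = i + 1 := by omega
      rw [hk4, this]
  rcases hii with h | h
  · right
    intro k h1 h2
    rw [hb k]
    by_cases hki : k ≤ i
    · rw [if_pos hki]
      rcases Nat.lt_or_ge k i with hlt' | hge
      · exact hlt k h1 hlt'
      · have : k = i := by omega
        rw [this, h]
    · rw [if_neg hki]
      exact hgt k (by omega) h2
  · left
    intro k h1 h2
    rw [ha k]
    by_cases hki : k < i
    · rw [if_pos hki]
      exact hlt k h1 hki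
    · rw [if_neg hki]
      rcases Nat.eq_or_lt_of_le (Nat.le_of_not_lt hki) with heq | hlt'
    
      · rw [← heq, h, heq]
      · exact hgt k hlt' h2
end

section
/- Let f = {f_1 < ... < f_{n+1}} ⊆ [m], and for 1 ≤ k ≤ n+1 let a^{(k)} denote the increasing n-tuple obtained from f by deleting f_k. For any fixed index s with 1 ≤ s ≤ n, consider elements z = Σ_{k=1}^{n+1} λ_k x_{s f_k} e_{a^{(k)}} (λ_k scalars in a field k) in the free module with basis {e_a : a an n-subset of [m]}, mapped by d(e_a) = x_{1 a_1} x_{2 a_2} ··· x_{n a_n} into the polynomial ring k[x_{ij} : 1 ≤ i ≤ n, 1 ≤ j ≤ m]. Then z is in the kernel of d if and only if λ_k = 0 for all k ∉ {s, s+1} and λ_s x_{s f_s} · LT[a^{(s)}] + λ_{s+1} x_{s f_{s+1}} · LT[a^{(s+1)}] = 0, i.e., λ_{s+1} = -λ_s; equivalently, the kernel in this multidegree is spanned by x_{s f_s} e_{a^{(s)}} - x_{s f_{s+1}} e_{a^{(s+1)}}. -/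
open MvPolynomial

/-- The diagonal leading term `LT[c] = x_{1 c_1} x_{2 c_2} ⋯ x_{n c_n}` of the
maximal minor on columns `c = (c_1 < ⋯ < c_n)` (1-indexed), as a polynomial in
`K[x_{ij}]`. -/
noncomputable def LTpoly (K : Type*) [Field K] (n : ℕ) (c : ℕ → ℕ) :
    MvPolynomial (ℕ × ℕ) K :=
  ∏ k ∈ Finset.Icc 1 n, X (k, c k)

/-- `delAt f k` is the increasing `n`-tuple obtained from the `(n+1)`-tuple `f`
by deleting its `k`-th entry (1-indexed). -/
def delAt (f : ℕ → ℕ) (k : ℕ) : ℕ → ℕ := fun j => if j < k then f j else f (j + 1)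

/-- exponent of the monomial `x_{s f_k}·LT[delAt f k]` -/
noncomputable def mu (f : ℕ → ℕ) (n s k : ℕ) : (ℕ × ℕ) →₀ ℕ :=
  Finsupp.single (s, f k) 1 + ∑ i ∈ Finset.Icc 1 n, Finsupp.single (i, delAt f k i) 1

lemma prod_X_monomial {σ : Type*} (K : Type*) [Field K] (t : Finset ℕ) (g : ℕ → σ) :
    (∏ i ∈ t, X (g i) : MvPolynomial σ K)
      = monomial (∑ i ∈ t, Finsupp.single (g i) 1) 1 := by
  classical
  induction t using Finset.cons_induction with
  | empty => simp
  | cons a t ha ih =>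
      rw [Finset.prod_cons, Finset.sum_cons, ih, X, monomial_mul, one_mul]

lemma term_eq (K : Type*) [Field K] (n s : ℕ) (f : ℕ → ℕ) (a : K) (k : ℕ) :
    C a * X ((s, f k) : ℕ × ℕ) * LTpoly K n (delAt f k)
      = monomial (mu f n s k) a := by
  rw [LTpoly, prod_X_monomial, mu, X, C_apply, monomial_mul, monomial_mul]
  simp

lemma mu_apply (f : ℕ → ℕ) (n s k i c : ℕ) (hi1 : 1 ≤ i) (hi2 : i ≤ n) (his : i ≠ s) :
    mu f n s k (i, c) = if delAt f k i = c then 1 else 0 := by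
  rw [mu, Finsupp.add_apply, Finsupp.finset_sum_apply]
  rw [Finsupp.single_apply, if_neg (by simp [Ne.symm his])]
  rw [zero_add, Finset.sum_eq_single_of_mem i (by simp [hi1, hi2])]
  · rw [Finsupp.single_apply]
    congr 1
    simp
  · intro b _ hb
    rw [Finsupp.single_apply, if_neg (by simp [hb])]

lemma mu_pair_eq (f : ℕ → ℕ) (n s : ℕ) (hs1 : 1 ≤ s) (hs2 : s ≤ n) :
    mu f n s s = mu f n s (s + 1) := by
  have hmem : s ∈ Finset.Icc 1 n := by simp [hs1, hs2]
  rw [mu, mu, ← Finset.add_sum_erase _ _ hmem, ← Finset.add_sum_erase _ _ hmem]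
  have h1 : delAt f s s = f (s + 1) := by simp [delAt]
  have h2 : delAt f (s + 1) s = f s := by simp [delAt]
  have h3 : ∀ i ∈ (Finset.Icc 1 n).erase s,
      Finsupp.single ((i, delAt f s i) : ℕ × ℕ) 1
        = Finsupp.single (i, delAt f (s + 1) i) 1 := by
    intro i hi
    have his : i ≠ s := (Finset.mem_erase.mp hi).1
    have : delAt f s i = delAt f (s + 1) i := by
      unfold delAt
      rcases lt_or_gt_of_ne his with h | h
      · rw [if_pos h, if_pos (by omega)]
      · rw [if_neg (by omega), if_neg (by omega)]
    rw [this]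
  rw [Finset.sum_congr rfl h3, h1, h2]
  abel

lemma mu_ne (f : ℕ → ℕ) (n s : ℕ)
    (hf : ∀ j k : ℕ, 1 ≤ j → j < k → k ≤ n + 1 → f j < f k)
    (hs1 : 1 ≤ s) (hs2 : s ≤ n) {j k : ℕ} (hj : 1 ≤ j) (hk : k ≤ n + 1)
    (hjk : j < k) (hpair : ¬(j = s ∧ k = s + 1)) :
    mu f n s j ≠ mu f n s k := by
  set i : ℕ := if j = s then s + 1 else j with hi
  have hik : i < k := by
    rcases eq_or_ne j s with h | h
    · have : k ≠ s + 1 := fun hc => hpair ⟨h, hc⟩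
      simp only [hi, if_pos h]; omega
    · simp only [hi, if_neg h]; omega
  have his : i ≠ s := by rw [hi]; split <;> omega
  have hi1 : 1 ≤ i := by rw [hi]; split <;> omega
  have hi2 : i ≤ n := by omega
  have hji : j ≤ i := by rw [hi]; split <;> omega
  intro h
  have h1 : mu f n s j (i, f (i + 1)) = 1 := by
    rw [mu_apply f n s j i _ hi1 hi2 his, if_pos]
    unfold delAt
    rw [if_neg (by omega)]
  have h2 : mu f n s k (i, f (i + 1)) = 0 := by
    rw [mu_apply f n s k i _ hi1 hi2 his, if_neg]
    unfold delAt
    rw [if_pos hik]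
    exact Nat.ne_of_lt (hf i (i + 1) hi1 (by omega) (by omega))
  rw [h, h2] at h1
  exact one_ne_zero h1.symm

lemma mu_eq_iff (f : ℕ → ℕ) (n s : ℕ)
    (hf : ∀ j k : ℕ, 1 ≤ j → j < k → k ≤ n + 1 → f j < f k)
    (hs1 : 1 ≤ s) (hs2 : s ≤ n) {j k : ℕ}
    (hj : j ∈ Finset.Icc 1 (n + 1)) (hk : k ∈ Finset.Icc 1 (n + 1)) :
    mu f n s j = mu f n s k ↔
      (j = k ∨ (j = s ∧ k = s + 1) ∨ (j = s + 1 ∧ k = s)) := by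
  simp only [Finset.mem_Icc] at hj hk
  constructor
  · intro h
    by_contra hc
    push_neg at hc
    obtain ⟨h1, h2, h3⟩ := hc
    rcases lt_trichotomy j k with hlt | heq | hgt
    · exact mu_ne f n s hf hs1 hs2 hj.1 hk.2 hlt (fun hab => h2 hab.1 hab.2) h
    · exact h1 heq
    · exact mu_ne f n s hf hs1 hs2 hk.1 hj.2 hgt
        (fun hab => h3 hab.2 hab.1) h.symm
  · rintro (rfl | ⟨h1, h2⟩ | ⟨h1, h2⟩)
    · rfl
    · rw [h1, h2]; exact mu_pair_eq f n s hs1 hs2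
    · rw [h1, h2]; exact (mu_pair_eq f n s hs1 hs2).symm

/-- For `f = (f_1 < ⋯ < f_{n+1}) ⊆ [m]`, `a⁽ᵏ⁾ = delAt f k`, a fixed row index
`1 ≤ s ≤ n`, and scalars `λ_k`, the element `z = Σ_k λ_k x_{s f_k} e_{a⁽ᵏ⁾}` is
in the kernel of the map `e_a ↦ LT[a]` if and only if `λ_k = 0` for all
`k ∉ {s, s+1}` and `λ_{s+1} = -λ_s`. -/
theorem syzygy_in_multidegree (K : Type*) [Field K] (n m : ℕ) (hn : 1 ≤ n)
    (f : ℕ → ℕ)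
    (hf : ∀ j k : ℕ, 1 ≤ j → j < k → k ≤ n + 1 → f j < f k)
    (hfr : ∀ k : ℕ, 1 ≤ k → k ≤ n + 1 → f k ∈ Finset.Icc 1 m)
    (s : ℕ) (hs1 : 1 ≤ s) (hs2 : s ≤ n) (lam : ℕ → K) :
    (∑ k ∈ Finset.Icc 1 (n + 1),
        C (lam k) * X ((s, f k) : ℕ × ℕ) * LTpoly K n (delAt f k)) = 0 ↔
      (∀ k ∈ Finset.Icc 1 (n + 1), k ≠ s → k ≠ s + 1 → lam k = 0) ∧
        lam (s + 1) = - lam s := by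
  have hsum : (∑ k ∈ Finset.Icc 1 (n + 1),
      C (lam k) * X ((s, f k) : ℕ × ℕ) * LTpoly K n (delAt f k))
      = ∑ k ∈ Finset.Icc 1 (n + 1), monomial (mu f n s k) (lam k) :=
    Finset.sum_congr rfl fun k _ => term_eq K n s f (lam k) k
  rw [hsum]
  have hsmem : s ∈ Finset.Icc 1 (n + 1) := by simp; omega
  have hs1mem : s + 1 ∈ Finset.Icc 1 (n + 1) := by simp; omega
  constructor
  · intro h
    have hco : ∀ d, (∑ k ∈ Finset.Icc 1 (n + 1),
        monomial (mu f n s k) (lam k)).coeff d = 0 := by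
      intro d; rw [h]; simp
    have key : ∀ d, (∑ k ∈ Finset.Icc 1 (n + 1),
        monomial (mu f n s k) (lam k)).coeff d
        = ∑ k ∈ Finset.Icc 1 (n + 1), if mu f n s k = d then lam k else 0 := by
      intro d
      rw [coeff_sum]
      exact Finset.sum_congr rfl fun k _ => coeff_monomial d _ _
    constructor
    · intro k hk hks hks1
      have h1 := hco (mu f n s k)
      rw [key] at h1
      rw [Finset.sum_eq_single_of_mem k hk] at h1
      · rwa [if_pos rfl] at h1
      · intro j hj hjk
        rw [if_neg]
        intro hmu
        rcases (mu_eq_iff f n s hf hs1 hs2 hj hk).mp hmu with rfl | ⟨_, h2⟩ | ⟨_, h2⟩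
        · exact hjk rfl
        · exact hks1 h2
        · exact hks h2
    · have h1 := hco (mu f n s s)
      rw [key] at h1
      have hcond : ∀ j ∈ Finset.Icc 1 (n + 1),
          (if mu f n s j = mu f n s s then lam j else 0)
            = (if j = s ∨ j = s + 1 then lam j else 0) := by
        intro j hj
        congr 1
        apply propext
        constructor
        · intro hmu
          rcases (mu_eq_iff f n s hf hs1 hs2 hj hsmem).mp hmu with rfl | ⟨h2, _⟩ | ⟨h2, _⟩
          · exact Or.inl rfl
          · exact Or.inl h2
          · exact Or.inr h2
        · rintro (rfl | rfl)
          · rfl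
          · exact (mu_pair_eq f n s hs1 hs2).symm
      rw [Finset.sum_congr rfl hcond, ← Finset.sum_filter] at h1
      have hfilt : Finset.filter (fun j => j = s ∨ j = s + 1) (Finset.Icc 1 (n + 1))
          = {s, s + 1} := by
        ext j
        simp only [Finset.mem_filter, Finset.mem_insert, Finset.mem_singleton,
          Finset.mem_Icc]
        constructor
        · rintro ⟨_, h2⟩; exact h2
        · rintro (rfl | rfl) <;> constructor <;> omega
      rw [hfilt, Finset.sum_pair (by omega)] at h1
      linear_combination h1
  · rintro ⟨h0, h1⟩
    have hsub : ({s, s + 1} : Finset ℕ) ⊆ Finset.Icc 1 (n + 1) := by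
      intro j hj
      simp only [Finset.mem_insert, Finset.mem_singleton] at hj
      rcases hj with rfl | rfl
      · exact hsmem
      · exact hs1mem
    rw [← Finset.sum_subset hsub]
    · rw [Finset.sum_pair (by omega : s ≠ s + 1), ← mu_pair_eq f n s hs1 hs2, h1,
        ← map_add, add_neg_cancel, map_zero]
    · intro j hj hjns
      simp only [Finset.mem_insert, Finset.mem_singleton] at hjns
      push_neg at hjns
      rw [h0 j hj hjns.1 hjns.2, map_zero]
end
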